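/- Let P be a probability distribution on [0,1] with Lebesgue density, and for n > 1 let t_n(x) be the unique positive solution of t² · P([x−t, x+t]) = (log n)/n. Then the function x ↦ t_n(x) is 1-Lipschitz on [0,1]. -/
import Mathlib


open MeasureTheory Set

/-- The spread function `t_n` is 1-Lipschitz on `[0,1]`. -/
theorem spread_function_lipschitz
    (P : Measure ℝ) [IsProbabilityMeasure P]
    (hac : P ≪ volume) (hsupp : P (Set.Icc (0:ℝ) 1) = 1)
    (n : ℕ) (hn : 1 < n) (t : ℝ → ℝ)
    (ht_pos : ∀ x ∈ Set.Icc (0:ℝ) 1, 0 < t x)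
    (ht_eq : ∀ x ∈ Set.Icc (0:ℝ) 1,
      (t x) ^ 2 * (P (Set.Icc (x - t x) (x + t x))).toReal = Real.log n / n) :
    ∀ x ∈ Set.Icc (0:ℝ) 1, ∀ y ∈ Set.Icc (0:ℝ) 1, |t x - t y| ≤ |x - y| := by
  have hc : 0 < Real.log n / n := by
    apply div_pos
    · exact Real.log_pos (by exact_mod_cast hn)
    · positivity
  have key : ∀ x ∈ Set.Icc (0:ℝ) 1, ∀ y ∈ Set.Icc (0:ℝ) 1, t x ≤ t y + |x - y| := by
    intro x hx y hy
    by_contra h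
    push_neg at h
    have htx := ht_pos x hx
    have hty := ht_pos y hy
    have hty_lt : t y < t x := lt_of_le_of_lt (le_add_of_nonneg_right (abs_nonneg _)) h
    have hsub : Set.Icc (y - t y) (y + t y) ⊆ Set.Icc (x - t x) (x + t x) := by
      apply Set.Icc_subset_Icc
      · have h1 : x - y ≤ |x - y| := le_abs_self _
        linarith
      · have h1 : y - x ≤ |x - y| := by rw [abs_sub_comm]; exact le_abs_self _
        linarith
    set Py := (P (Set.Icc (y - t y) (y + t y))).toReal with hPydef
    set Px := (P (Set.Icc (x - t x) (x + t x))).toReal with hPxdef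
    have hPy_pos : 0 < Py := by
      rcases lt_or_eq_of_le (ENNReal.toReal_nonneg : (0:ℝ) ≤ Py) with h' | h'
      · exact h'
      · exfalso
        have := ht_eq y hy
        rw [← h'] at this
        simp at this
        linarith
    have hle : Py ≤ Px := by
      apply ENNReal.toReal_mono (measure_ne_top P _)
      exact measure_mono hsub
    have h1 : Real.log n / n = t x ^ 2 * Px := (ht_eq x hx).symm
    have h2 : t y ^ 2 * Py = Real.log n / n := ht_eq y hy
    have hsq : t y ^ 2 < t x ^ 2 := by nlinarith
    have : t y ^ 2 * Py < t x ^ 2 * Px := by nlinarith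
    linarith
  intro x hx y hy
  rw [abs_sub_le_iff]
  constructor
  · have := key x hx y hy; linarith
  · have := key y hy x hx; rw [abs_sub_comm]; linarith
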